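/- Let n ≥ 1 and let f ∈ C([0,1]) be convex. Then for every x ∈ [0,1], f(x) ≤ S_{Δₙ}f(x) ≤ Bₙf(x); consequently, since 𝔅̄ₙ is a positive operator, 𝔅̄ₙf(x) ≤ 𝔅̄ₙ(S_{Δₙ}f)(x) ≤ 𝔅̄ₙ(Bₙf)(x) for all x ∈ [0,1]. -/

import Mathlib

open MeasureTheory Finset

/-- The Beta operator of Mühlbach and Lupaş on `C[0,1]`. -/
noncomputable def betaOp (n : ℕ) (f : ℝ → ℝ) (x : ℝ) : ℝ :=
  if x = 0 then f 0
  else if x = 1 then f 1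
  else (∫ t in (0:ℝ)..1, t ^ ((n:ℝ) * x - 1) * (1 - t) ^ ((n:ℝ) * (1 - x) - 1) * f t) /
       (∫ t in (0:ℝ)..1, t ^ ((n:ℝ) * x - 1) * (1 - t) ^ ((n:ℝ) * (1 - x) - 1))

/-- The Bernstein operator. -/
noncomputable def bernsteinOp (n : ℕ) (f : ℝ → ℝ) (x : ℝ) : ℝ :=
  ∑ k ∈ Finset.range (n + 1), f ((k : ℝ) / n) * (n.choose k) * x ^ k * (1 - x) ^ (n - k)

/-- The hat function `u_{n,i}` of the piecewise linear interpolation at the nodes `j/n`. -/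
noncomputable def hatFn (n i : ℕ) (x : ℝ) : ℝ := max 0 (1 - |(n : ℝ) * x - i|)

/-- Piecewise linear interpolation at the nodes `0, 1/n, …, 1`. -/
noncomputable def piecewiseLinOp (n : ℕ) (f : ℝ → ℝ) (x : ℝ) : ℝ :=
  ∑ i ∈ Finset.range (n + 1), f ((i : ℝ) / n) * hatFn n i x

/-! ### Bernstein identities -/

lemma bern_sum (n : ℕ) (x : ℝ) :
    ∑ k ∈ Finset.range (n+1), (n.choose k : ℝ) * x^k * (1-x)^(n-k) = 1 := by
  have h := congrArg (Polynomial.eval x) (bernsteinPolynomial.sum ℝ n)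
  simpa [bernsteinPolynomial, Polynomial.eval_finset_sum] using h

lemma bern_sum_smul (n : ℕ) (x : ℝ) :
    ∑ k ∈ Finset.range (n+1), (k : ℝ) * ((n.choose k : ℝ) * x^k * (1-x)^(n-k)) = n * x := by
  have h := congrArg (Polynomial.eval x) (bernsteinPolynomial.sum_smul ℝ n)
  simpa [bernsteinPolynomial, Polynomial.eval_finset_sum, mul_assoc] using h

/-! ### Chord lemma -/

lemma chord_le {f : ℝ → ℝ} (hconv : ConvexOn ℝ (Set.Icc (0:ℝ) 1) f) {a b t : ℝ}
    (ha : a ∈ Set.Icc (0:ℝ) 1) (hb : b ∈ Set.Icc (0:ℝ) 1) (ht : t ∈ Set.Icc (0:ℝ) 1)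
    (hab : a < b) (hout : t ≤ a ∨ b ≤ t) :
    f a + (f b - f a) / (b - a) * (t - a) ≤ f t := by
  have hba : (0:ℝ) < b - a := by linarith
  rcases hout with h | h
  · rcases h.eq_or_lt with rfl | h
    · simp
    · have hsl := hconv.slope_mono_adjacent ht hb h hab
      have h1 : f a - f t ≤ (f b - f a) / (b - a) * (a - t) :=
        (div_le_iff₀ (by linarith)).1 hsl
      have h2 : (f b - f a) / (b - a) * (a - t) = -((f b - f a) / (b - a) * (t - a)) := by ring
      linarith
  · have h2 : (f b - f a) / (b - a) * (b - a) = f b - f a :=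
      div_mul_cancel₀ _ hba.ne'
    rcases h.eq_or_lt with rfl | h
    · linarith
    · have hsl := hconv.slope_mono_adjacent ha ht hab h
      have h1 : (f b - f a) / (b - a) * (t - b) ≤ f t - f b :=
        (le_div_iff₀ (by linarith)).1 hsl
      have h3 : (f b - f a) / (b - a) * (t - a)
          = (f b - f a) / (b - a) * (t - b) + (f b - f a) / (b - a) * (b - a) := by ring
      linarith

/-! ### Choice of subinterval -/

lemma exists_node (n : ℕ) (hn : 1 ≤ n) {x : ℝ} (hx : x ∈ Set.Icc (0:ℝ) 1) :
    ∃ i : ℕ, i + 1 ≤ n ∧ (i : ℝ) ≤ n * x ∧ (n:ℝ) * x ≤ i + 1 := by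
  have hx0 : (0:ℝ) ≤ x := hx.1
  have hx1 : x ≤ 1 := hx.2
  have hn0 : (0:ℝ) < n := by exact_mod_cast hn
  have hnx0 : (0:ℝ) ≤ (n:ℝ) * x := by positivity
  have hnxn : (n:ℝ) * x ≤ n := by nlinarith
  refine ⟨min ⌊(n:ℝ) * x⌋₊ (n-1), by omega, ?_, ?_⟩
  · rcases le_or_gt ⌊(n:ℝ) * x⌋₊ (n-1) with hc | hc
    · rw [min_eq_left hc]
      exact Nat.floor_le hnx0
    · rw [min_eq_right hc.le]
      have h1 : (⌊(n:ℝ) * x⌋₊ : ℝ) ≤ (n:ℝ) * x := Nat.floor_le hnx0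
      have h2 : (n:ℕ) ≤ ⌊(n:ℝ) * x⌋₊ := by omega
      have h3 : (n:ℝ) ≤ (⌊(n:ℝ) * x⌋₊ : ℝ) := by exact_mod_cast h2
      have h4 : ((n-1:ℕ):ℝ) ≤ (n:ℝ) := by
        have : ((n-1:ℕ):ℝ) = (n:ℝ) - 1 := by
          rw [Nat.cast_sub hn]; norm_num
        rw [this]; linarith
      linarith
  · rcases le_or_gt ⌊(n:ℝ) * x⌋₊ (n-1) with hc | hc
    · rw [min_eq_left hc]
      exact (Nat.lt_floor_add_one _).le
    · rw [min_eq_right hc.le]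
      have : ((n-1:ℕ):ℝ) = (n:ℝ) - 1 := by rw [Nat.cast_sub hn]; norm_num
      rw [this]; linarith

/-! ### Evaluation of the piecewise linear interpolant -/

lemma piecewise_eval (n : ℕ) (f : ℝ → ℝ) {x : ℝ} {i : ℕ} (hi : i + 1 ≤ n)
    (h1 : (i:ℝ) ≤ n * x) (h2 : (n:ℝ) * x ≤ i + 1) :
    piecewiseLinOp n f x
      = (1 - ((n:ℝ) * x - i)) * f ((i:ℝ)/n) + ((n:ℝ) * x - i) * f (((i:ℝ)+1)/n) := by
  unfold piecewiseLinOp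
  rw [Finset.sum_eq_add_of_mem i (i+1) (by simp; omega) (by simp; omega) (by omega) ?_]
  · have hhi : hatFn n i x = 1 - ((n:ℝ) * x - i) := by
      unfold hatFn
      rw [abs_of_nonneg (by linarith), max_eq_right (by linarith)]
    have hhi1 : hatFn n (i+1) x = (n:ℝ) * x - i := by
      unfold hatFn
      have hc : ((i+1:ℕ):ℝ) = (i:ℝ) + 1 := by push_cast; ring
      rw [hc, abs_of_nonpos (by linarith)]
      rw [max_eq_right (by linarith)]
      ring
    rw [hhi, hhi1]
    have hc : ((i+1:ℕ):ℝ) = (i:ℝ) + 1 := by push_cast; ring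
    rw [hc]
    ring
  · intro c _ hc
    have : hatFn n c x = 0 := by
      unfold hatFn
      rcases lt_or_gt_of_ne hc.1 with h | h
      · have : (c:ℝ) + 1 ≤ i := by exact_mod_cast h
        rw [max_eq_left]
        have habs : (n:ℝ) * x - c ≤ |(n:ℝ) * x - c| := le_abs_self _
        linarith
      · have hcc : (i:ℝ) + 2 ≤ c := by
          have : i + 2 ≤ c := by omega
          exact_mod_cast this
        rw [max_eq_left]
        have habs : -((n:ℝ) * x - c) ≤ |(n:ℝ) * x - c| := neg_le_abs _
        linarith
    rw [this, mul_zero]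

/-! ### `f ≤ Sf` -/

lemma f_le_pl (n : ℕ) (hn : 1 ≤ n) (f : ℝ → ℝ)
    (hconv : ConvexOn ℝ (Set.Icc (0:ℝ) 1) f) {x : ℝ} (hx : x ∈ Set.Icc (0:ℝ) 1) :
    f x ≤ piecewiseLinOp n f x := by
  obtain ⟨i, hi, h1, h2⟩ := exists_node n hn hx
  rw [piecewise_eval n f hi h1 h2]
  have hn0 : (0:ℝ) < n := by exact_mod_cast hn
  have ha : (i:ℝ)/n ∈ Set.Icc (0:ℝ) 1 := by
    constructor
    · positivity
    · rw [div_le_one hn0]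
      exact_mod_cast Nat.le_of_succ_le hi
  have hb : ((i:ℝ)+1)/n ∈ Set.Icc (0:ℝ) 1 := by
    constructor
    · positivity
    · rw [div_le_one hn0]
      exact_mod_cast hi
  have key := hconv.2 ha hb (show (0:ℝ) ≤ 1 - ((n:ℝ)*x - (i:ℝ)) by linarith)
    (show (0:ℝ) ≤ (n:ℝ)*x - (i:ℝ) by linarith) (by ring)
  have hxeq : (1 - ((n:ℝ)*x - i)) • ((i:ℝ)/n) + ((n:ℝ)*x - i) • (((i:ℝ)+1)/n) = x := by
    simp only [smul_eq_mul]
    field_simp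
    ring
  rw [hxeq] at key
  exact key

/-! ### `Sf ≤ Bf` -/

lemma pl_le_bern (n : ℕ) (hn : 1 ≤ n) (f : ℝ → ℝ)
    (hconv : ConvexOn ℝ (Set.Icc (0:ℝ) 1) f) {x : ℝ} (hx : x ∈ Set.Icc (0:ℝ) 1) :
    piecewiseLinOp n f x ≤ bernsteinOp n f x := by
  obtain ⟨i, hi, h1, h2⟩ := exists_node n hn hx
  rw [piecewise_eval n f hi h1 h2]
  have hn0 : (0:ℝ) < n := by exact_mod_cast hn
  set a : ℝ := (i:ℝ)/n with hadef
  set b : ℝ := ((i:ℝ)+1)/n with hbdef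
  have ha : a ∈ Set.Icc (0:ℝ) 1 := by
    constructor
    · positivity
    · rw [hadef, div_le_one hn0]; exact_mod_cast Nat.le_of_succ_le hi
  have hb : b ∈ Set.Icc (0:ℝ) 1 := by
    constructor
    · positivity
    · rw [hbdef, div_le_one hn0]; exact_mod_cast hi
  have hab : a < b := by
    rw [hadef, hbdef, div_lt_div_iff₀ hn0 hn0]
    nlinarith
  set s : ℝ := (f b - f a) / (b - a) with hsdef
  -- Step 3 : the Bernstein image of the chord is the chord
  have step3 : ∑ k ∈ Finset.range (n+1),
      (f a + s * ((k:ℝ)/n - a)) * ((n.choose k : ℝ) * x^k * (1-x)^(n-k))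
      = f a + s * (x - a) := by
    have expand : ∀ k ∈ Finset.range (n+1),
        (f a + s * ((k:ℝ)/n - a)) * ((n.choose k : ℝ) * x^k * (1-x)^(n-k))
        = (f a - s * a) * ((n.choose k : ℝ) * x^k * (1-x)^(n-k))
          + (s/n) * ((k:ℝ) * ((n.choose k : ℝ) * x^k * (1-x)^(n-k))) := by
      intro k _
      field_simp
      ring
    rw [Finset.sum_congr rfl expand, Finset.sum_add_distrib, ← Finset.mul_sum,
      ← Finset.mul_sum, bern_sum, bern_sum_smul]
    field_simp
    ring
  -- Step 2 : chord ≤ f at the nodes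
  have step2 : ∑ k ∈ Finset.range (n+1),
      (f a + s * ((k:ℝ)/n - a)) * ((n.choose k : ℝ) * x^k * (1-x)^(n-k))
      ≤ bernsteinOp n f x := by
    unfold bernsteinOp
    refine Finset.sum_le_sum ?_
    intro k hk
    have hkn : k ≤ n := by
      simp only [Finset.mem_range] at hk; omega
    have hknode : (k:ℝ)/n ∈ Set.Icc (0:ℝ) 1 := by
      constructor
      · positivity
      · rw [div_le_one hn0]; exact_mod_cast hkn
    have hout : (k:ℝ)/n ≤ a ∨ b ≤ (k:ℝ)/n := by
      rcases le_or_gt k i with h | h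
      · left
        rw [hadef, div_le_div_iff_of_pos_right hn0]
        exact_mod_cast h
      · right
        rw [hbdef, div_le_div_iff_of_pos_right hn0]
        have : (i:ℝ) + 1 ≤ k := by exact_mod_cast h
        linarith
    have hchord := chord_le hconv ha hb hknode hab hout
    have hwnn : (0:ℝ) ≤ (n.choose k : ℝ) * x^k * (1-x)^(n-k) := by
      have hx1 : (0:ℝ) ≤ 1 - x := by linarith [hx.2]
      have hx0 : (0:ℝ) ≤ x := hx.1
      positivity
    calc (f a + s * ((k:ℝ)/n - a)) * ((n.choose k : ℝ) * x^k * (1-x)^(n-k))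
        ≤ f ((k:ℝ)/n) * ((n.choose k : ℝ) * x^k * (1-x)^(n-k)) :=
          mul_le_mul_of_nonneg_right hchord hwnn
      _ = f ((k:ℝ)/n) * (n.choose k : ℝ) * x^k * (1-x)^(n-k) := by ring
  -- Step 1 : the interpolant equals the chord at x
  have step1 : (1 - ((n:ℝ) * x - i)) * f a + ((n:ℝ) * x - i) * f b
      = f a + s * (x - a) := by
    have hba : b - a = 1/n := by
      rw [hadef, hbdef]; field_simp; ring
    have hs : s = (f b - f a) * n := by
      rw [hsdef, hba]
      field_simp
    rw [hs, hadef]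
    field_simp
    ring
  rw [step1]
  calc f a + s * (x - a)
      = ∑ k ∈ Finset.range (n+1),
        (f a + s * ((k:ℝ)/n - a)) * ((n.choose k : ℝ) * x^k * (1-x)^(n-k)) := step3.symm
    _ ≤ bernsteinOp n f x := step2

/-! ### Integrability of the Beta weight -/

lemma weight_int_left {p q : ℝ} (hp : -1 < p) :
    IntervalIntegrable (fun t => t ^ p * (1 - t) ^ q) volume 0 (1/2:ℝ) := by
  set C : ℝ := max 1 ((1/2:ℝ) ^ q) with hC
  have hC1 : (1:ℝ) ≤ C := le_max_left _ _
  have hCb : ∀ t ∈ Set.Ioc (0:ℝ) (1/2:ℝ), (1 - t) ^ q ≤ C := by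
    intro t ht
    rcases le_or_gt 0 q with hq | hq
    · refine le_trans ?_ (le_max_left _ _)
      exact Real.rpow_le_one (by linarith [ht.2]) (by linarith [ht.1]) hq
    · refine le_trans ?_ (le_max_right _ _)
      exact Real.rpow_le_rpow_of_nonpos (by norm_num) (by linarith [ht.2]) hq.le
  have hbase : IntervalIntegrable (fun t => C * t ^ p) volume 0 (1/2:ℝ) :=
    (intervalIntegral.intervalIntegrable_rpow' hp).const_mul C
  refine IntervalIntegrable.mono_fun hbase ?_ ?_
  · -- measurability
    have hcont : ContinuousOn (fun t : ℝ => t ^ p * (1 - t) ^ q) (Set.Ioc (0:ℝ) (1/2:ℝ)) := by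
      apply ContinuousOn.mul
      · exact (continuousOn_id).rpow_const (fun t ht => Or.inl (ne_of_gt ht.1))
      · exact (continuousOn_const.sub continuousOn_id).rpow_const
          (fun t ht => Or.inl (by
            have h1 : (0:ℝ) < 1 - t := by linarith [ht.2]
            simpa using h1.ne'))
    rw [Set.uIoc_of_le (by norm_num : (0:ℝ) ≤ 1/2)]
    exact hcont.aestronglyMeasurable measurableSet_Ioc
  · rw [Set.uIoc_of_le (by norm_num : (0:ℝ) ≤ 1/2)]
    filter_upwards [ae_restrict_mem measurableSet_Ioc] with t ht
    have ht0 : 0 < t := ht.1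
    have htp : (0:ℝ) ≤ t ^ p := Real.rpow_nonneg ht0.le p
    have htq : (0:ℝ) ≤ (1 - t) ^ q := Real.rpow_nonneg (by linarith [ht.2]) q
    rw [Real.norm_eq_abs, Real.norm_eq_abs, abs_of_nonneg (mul_nonneg htp htq),
      abs_of_nonneg (by positivity)]
    calc t ^ p * (1 - t) ^ q ≤ t ^ p * C := by
          exact mul_le_mul_of_nonneg_left (hCb t ht) htp
      _ = C * t ^ p := mul_comm _ _

lemma weight_int {p q : ℝ} (hp : -1 < p) (hq : -1 < q) :
    IntervalIntegrable (fun t => t ^ p * (1 - t) ^ q) volume 0 1 := by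
  have h2 : IntervalIntegrable (fun t => t ^ p * (1 - t) ^ q) volume (1/2:ℝ) 1 := by
    have h := ((weight_int_left (q := p) hq).comp_sub_left 1).symm
    norm_num at h
    have heq : (fun x : ℝ => (1 - x) ^ q * x ^ p)
        = fun t : ℝ => t ^ p * (1 - t) ^ q := funext fun t => mul_comm _ _
    rwa [heq] at h
  exact (weight_int_left hp).trans h2


/-! ### Monotonicity of the Beta operator -/

lemma weight_mul_integrable {p q : ℝ} (hp : -1 < p) (hq : -1 < q) {g : ℝ → ℝ}
    (hgc : ContinuousOn g (Set.Icc 0 1)) :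
    IntervalIntegrable (fun t => t ^ p * (1 - t) ^ q * g t) volume 0 1 := by
  obtain ⟨M, hM⟩ := isCompact_Icc.exists_bound_of_continuousOn hgc
  have hM0 : (0:ℝ) ≤ M := le_trans (norm_nonneg (g 0)) (hM 0 (by norm_num))
  refine IntervalIntegrable.mono_fun ((weight_int hp hq).const_mul M) ?_ ?_
  · rw [Set.uIoc_of_le (zero_le_one (α := ℝ))]
    have hmeq : volume.restrict (Set.Ioc (0:ℝ) 1) = volume.restrict (Set.Ioo (0:ℝ) 1) :=
      (Measure.restrict_congr_set MeasureTheory.Ioo_ae_eq_Ioc).symm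
    rw [hmeq]
    have hcont : ContinuousOn (fun t : ℝ => t ^ p * (1 - t) ^ q * g t) (Set.Ioo (0:ℝ) 1) := by
      apply ContinuousOn.mul
      · apply ContinuousOn.mul
        · exact (continuousOn_id).rpow_const (fun t ht => Or.inl (ne_of_gt ht.1))
        · exact (continuousOn_const.sub continuousOn_id).rpow_const
            (fun t ht => Or.inl (by
              have h1 : (0:ℝ) < 1 - t := by linarith [ht.2]
              simpa using h1.ne'))
      · exact hgc.mono (Set.Ioo_subset_Icc_self)
    exact hcont.aestronglyMeasurable measurableSet_Ioo
  · rw [Set.uIoc_of_le (zero_le_one (α := ℝ))]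
    filter_upwards [ae_restrict_mem measurableSet_Ioc] with t ht
    have htp : (0:ℝ) ≤ t ^ p := Real.rpow_nonneg ht.1.le p
    have htq : (0:ℝ) ≤ (1 - t) ^ q := Real.rpow_nonneg (by linarith [ht.2]) q
    have hw : (0:ℝ) ≤ t ^ p * (1 - t) ^ q := mul_nonneg htp htq
    rw [Real.norm_eq_abs, Real.norm_eq_abs, abs_mul, abs_of_nonneg hw,
      abs_of_nonneg (by positivity : (0:ℝ) ≤ M * (t ^ p * (1 - t) ^ q))]
    calc t ^ p * (1 - t) ^ q * |g t| ≤ t ^ p * (1 - t) ^ q * M :=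
          mul_le_mul_of_nonneg_left (hM t ⟨ht.1.le, ht.2⟩) hw
      _ = M * (t ^ p * (1 - t) ^ q) := mul_comm _ _

lemma betaOp_mono (n : ℕ) (hn : 1 ≤ n) {g h : ℝ → ℝ}
    (hgc : ContinuousOn g (Set.Icc 0 1)) (hhc : ContinuousOn h (Set.Icc 0 1))
    (hle : ∀ t ∈ Set.Icc (0:ℝ) 1, g t ≤ h t) {x : ℝ} (hx : x ∈ Set.Icc (0:ℝ) 1) :
    betaOp n g x ≤ betaOp n h x := by
  unfold betaOp
  split_ifs with h0 h1
  · exact hle 0 (by norm_num)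
  · exact hle 1 (by norm_num)
  · have hx0 : 0 < x := lt_of_le_of_ne hx.1 (Ne.symm h0)
    have hx1 : x < 1 := lt_of_le_of_ne hx.2 h1
    have hn1 : (1:ℝ) ≤ n := by exact_mod_cast hn
    have hp : (-1:ℝ) < (n:ℝ) * x - 1 := by nlinarith
    have hq : (-1:ℝ) < (n:ℝ) * (1 - x) - 1 := by nlinarith
    have hw := weight_int hp hq
    have hD : 0 < ∫ t in (0:ℝ)..1, t ^ ((n:ℝ) * x - 1) * (1 - t) ^ ((n:ℝ) * (1 - x) - 1) := by
      refine intervalIntegral.intervalIntegral_pos_of_pos_on hw ?_ one_pos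
      intro t ht
      exact mul_pos (Real.rpow_pos_of_pos ht.1 _)
        (Real.rpow_pos_of_pos (by linarith [ht.2]) _)
    have hN : (∫ t in (0:ℝ)..1, t ^ ((n:ℝ) * x - 1) * (1 - t) ^ ((n:ℝ) * (1 - x) - 1) * g t)
        ≤ ∫ t in (0:ℝ)..1, t ^ ((n:ℝ) * x - 1) * (1 - t) ^ ((n:ℝ) * (1 - x) - 1) * h t := by
      refine intervalIntegral.integral_mono_on zero_le_one
        (weight_mul_integrable hp hq hgc) (weight_mul_integrable hp hq hhc) ?_
      intro t ht
      have hw0 : (0:ℝ) ≤ t ^ ((n:ℝ) * x - 1) * (1 - t) ^ ((n:ℝ) * (1 - x) - 1) :=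
        mul_nonneg (Real.rpow_nonneg ht.1 _) (Real.rpow_nonneg (by linarith [ht.2]) _)
      exact mul_le_mul_of_nonneg_left (hle t ht) hw0
    gcongr

/-! ### Continuity of the interpolant and the Bernstein polynomial -/

lemma hat_cont (n i : ℕ) : Continuous (hatFn n i) :=
  continuous_const.max
    (continuous_const.sub ((continuous_const.mul continuous_id).sub continuous_const).abs)

lemma pl_cont (n : ℕ) (f : ℝ → ℝ) : Continuous (piecewiseLinOp n f) :=
  continuous_finset_sum _ fun i _ => continuous_const.mul (hat_cont n i)

lemma bern_cont (n : ℕ) (f : ℝ → ℝ) : Continuous (bernsteinOp n f) :=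
  continuous_finset_sum _ fun k _ =>
    ((continuous_const.mul (continuous_pow k)).mul
      ((continuous_const.sub continuous_id).pow (n - k)))


/-- For convex `f ∈ C[0,1]`: `f ≤ S_{Δₙ}f ≤ Bₙf`, and consequently
`𝔅̄ₙf ≤ 𝔅̄ₙ(S_{Δₙ}f) ≤ 𝔅̄ₙ(Bₙf)` on `[0,1]`. -/
theorem convex_interpolation_inequalities (n : ℕ) (hn : 1 ≤ n) (f : ℝ → ℝ)
    (hf : ContinuousOn f (Set.Icc 0 1)) (hconv : ConvexOn ℝ (Set.Icc (0:ℝ) 1) f) :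
    ∀ x ∈ Set.Icc (0:ℝ) 1,
      f x ≤ piecewiseLinOp n f x ∧
      piecewiseLinOp n f x ≤ bernsteinOp n f x ∧
      betaOp n f x ≤ betaOp n (piecewiseLinOp n f) x ∧
      betaOp n (piecewiseLinOp n f) x ≤ betaOp n (bernsteinOp n f) x := by
  intro x hx
  have hplc : ContinuousOn (piecewiseLinOp n f) (Set.Icc 0 1) :=
    (pl_cont n f).continuousOn
  have hbc : ContinuousOn (bernsteinOp n f) (Set.Icc 0 1) :=
    (bern_cont n f).continuousOn
  refine ⟨f_le_pl n hn f hconv hx, pl_le_bern n hn f hconv hx, ?_, ?_⟩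
  · exact betaOp_mono n hn hf hplc (fun t ht => f_le_pl n hn f hconv ht) hx
  · exact betaOp_mono n hn hplc hbc (fun t ht => pl_le_bern n hn f hconv ht) hx
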